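/- Let (X, μ) be a σ-finite measure space and x ↦ P(x) a measurable family of density matrices on a finite-dimensional Hilbert space H with ∫ P(x) dμ(x) = I. Let ρ be a density matrix and define p̄(x) = Tr ρ P(x). Then p̄ is a probability density (nonnegative, bounded by 1, integrating to 1), and for every concave f : [0,1] → ℝ with f(0)=0: Tr f(ρ) ≤ ∫ f(p̄(x)) dμ(x). -/

import Mathlib

open Set Matrix MeasureTheory
open scoped ComplexOrder

/-- `Tr f(σ)` via functional calculus: the sum of `f` over the eigenvalues of a
Hermitian matrix `σ` (and `0` if `σ` is not Hermitian). -/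
noncomputable def trF {n : ℕ} (f : ℝ → ℝ) (σ : Matrix (Fin n) (Fin n) ℂ) : ℝ :=
  if h : σ.IsHermitian then ∑ i, f (h.eigenvalues i) else 0

/-- A density matrix: positive semidefinite with unit trace. -/
def IsDensityMatrix {n : ℕ} (σ : Matrix (Fin n) (Fin n) ℂ) : Prop :=
  σ.PosSemidef ∧ σ.trace = 1

theorem upper_berezin_lieb
    {d : ℕ} {X : Type*} [MeasurableSpace X] (μ : Measure X) [SigmaFinite μ]
    (P : X → Matrix (Fin d) (Fin d) ℂ)
    (hPdm : ∀ x, IsDensityMatrix (P x))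
    (hPint : ∀ i j, Integrable (fun x => P x i j) μ)
    (hPres : ∀ i j, ∫ x, P x i j ∂μ = (1 : Matrix (Fin d) (Fin d) ℂ) i j)
    (ρ : Matrix (Fin d) (Fin d) ℂ) (hρ : IsDensityMatrix ρ)
    (f : ℝ → ℝ) (hf : ConcaveOn ℝ (Icc (0:ℝ) 1) f) (hf0 : f 0 = 0)
    (hfint : Integrable (fun x => f (((ρ * P x).trace).re)) μ) :
    (∀ x, ((ρ * P x).trace).re ∈ Icc (0:ℝ) 1) ∧
    (∫ x, ((ρ * P x).trace).re ∂μ) = 1 ∧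
    trF f ρ ≤ ∫ x, f (((ρ * P x).trace).re) ∂μ := by
  obtain ⟨hρpsd, hρtr⟩ := hρ
  have hρH : ρ.IsHermitian := hρpsd.1
  set U : Matrix (Fin d) (Fin d) ℂ := (hρH.eigenvectorUnitary : Matrix (Fin d) (Fin d) ℂ)
    with hUdef
  set lam : Fin d → ℝ := hρH.eigenvalues with hlamdef
  have hUU : star U * U = 1 := Matrix.mem_unitaryGroup_iff'.mp hρH.eigenvectorUnitary.2
  have hUU' : U * star U = 1 := Matrix.mem_unitaryGroup_iff.mp hρH.eigenvectorUnitary.2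
  set B : X → Matrix (Fin d) (Fin d) ℂ := fun x => star U * P x * U with hBdef
  have hBpsd : ∀ x, (B x).PosSemidef := by
    intro x
    simpa [hBdef, Matrix.star_eq_conjTranspose] using
      (hPdm x).1.conjTranspose_mul_mul_same U
  -- diagonal entries of B are nonneg reals
  have hBdiag : ∀ x i, 0 ≤ B x i i := by
    intro x i
    have h := (hBpsd x).dotProduct_mulVec_nonneg (Pi.single i 1)
    simpa [dotProduct, Pi.single_apply, mulVec, Finset.sum_ite_eq] using h
  have hBre : ∀ x i, B x i i = ((B x i i).re : ℂ) := by
    intro x i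
    have h := hBdiag x i
    rw [Complex.le_def] at h
    apply Complex.ext
    · simp
    · simpa using h.2.symm
  set q : Fin d → X → ℝ := fun i x => (B x i i).re with hqdef
  have hq_nonneg : ∀ i x, 0 ≤ q i x := by
    intro i x
    have h := hBdiag x i
    rw [Complex.le_def] at h
    simpa using h.1
  -- sum of q over i is 1
  have hq_sum : ∀ x, ∑ i, q i x = 1 := by
    intro x
    have htr : (B x).trace = 1 := by
      rw [hBdef]
      rw [Matrix.trace_mul_cycle (star U) (P x) U, hUU', one_mul]
      exact (hPdm x).2
    have : (∑ i, B x i i) = (1 : ℂ) := by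
      simpa [Matrix.trace, Matrix.diag] using htr
    calc ∑ i, q i x = (∑ i, B x i i).re := (Complex.re_sum _ _).symm
    _ = 1 := by rw [this]; simp
  -- trace formula
  have htrace : ∀ x, (ρ * P x).trace = ∑ i, (lam i : ℂ) * B x i i := by
    intro x
    conv_lhs => rw [hρH.spectral_theorem, Unitary.conjStarAlgAut_apply]
    rw [mul_assoc, mul_assoc, Matrix.trace_mul_comm, mul_assoc]
    simp [Matrix.trace, Matrix.diag, Matrix.diagonal_mul, hBdef, hlamdef, hUdef]
  have hpbar : ∀ x, ((ρ * P x).trace).re = ∑ i, lam i * q i x := by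
    intro x
    rw [htrace x, Complex.re_sum]
    congr 1; funext i
    simp [Complex.mul_re, hqdef]
  -- eigenvalues in [0,1]
  have hlam_nonneg : ∀ i, 0 ≤ lam i := fun i => hρpsd.eigenvalues_nonneg i
  have hlam_sum : ∑ i, lam i = 1 := by
    have h1 : ρ.trace = ∑ i, (lam i : ℂ) := by
      conv_lhs => rw [hρH.spectral_theorem, Unitary.conjStarAlgAut_apply]
      rw [Matrix.trace_mul_cycle, hUU, one_mul]
      simp [Matrix.trace, Matrix.diag, Matrix.diagonal_apply, hlamdef]
    have : ((∑ i, lam i : ℝ) : ℂ) = 1 := by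
      push_cast
      rw [← h1, hρtr]
    exact_mod_cast this
  have hlam_le : ∀ i, lam i ≤ 1 := by
    intro i
    rw [← hlam_sum]
    exact Finset.single_le_sum (fun j _ => hlam_nonneg j) (Finset.mem_univ i)
  -- integrability of entries of B
  have hBint : ∀ i j, Integrable (fun x => B x i j) μ := by
    intro i j
    have : (fun x => B x i j)
        = fun x => ∑ k, (∑ l, star U i l * P x l k) * U k j := by
      funext x
      simp [hBdef, Matrix.mul_apply]
    rw [this]
    exact integrable_finset_sum _ fun k _ =>
      (integrable_finset_sum _ fun l _ => (hPint l k).const_mul _).mul_const _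
  have hBres : ∀ i j, ∫ x, B x i j ∂μ = (1 : Matrix (Fin d) (Fin d) ℂ) i j := by
    intro i j
    have h1 : (fun x => B x i j)
        = fun x => ∑ k, (∑ l, star U i l * P x l k) * U k j := by
      funext x
      simp [hBdef, Matrix.mul_apply]
    rw [h1]
    rw [integral_finset_sum _ fun k _ =>
      (integrable_finset_sum _ fun l _ => (hPint l k).const_mul _).mul_const _]
    have h2 : ∀ k, (∫ x, (∑ l, star U i l * P x l k) * U k j ∂μ)
        = (∑ l, star U i l * (1 : Matrix (Fin d) (Fin d) ℂ) l k) * U k j := by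
      intro k
      rw [integral_mul_const, integral_finset_sum _ fun l _ => (hPint l k).const_mul _]
      congr 1
      refine Finset.sum_congr rfl fun l _ => ?_
      rw [integral_const_mul, hPres l k]
    simp only [h2]
    have h7 : ∑ k, (∑ l, star U i l * (1 : Matrix (Fin d) (Fin d) ℂ) l k) * U k j
        = (star U * U) i j := by
      simp [Matrix.mul_apply, Matrix.one_apply]
    rw [h7, hUU]
  have hqint : ∀ i, Integrable (q i) μ := fun i => (hBint i i).re
  have hq_integral : ∀ i, ∫ x, q i x ∂μ = 1 := by
    intro i
    show (∫ x, (B x i i).re ∂μ) = 1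
    rw [← RCLike.re_eq_complex_re, integral_re (hBint i i), hBres i i]
    simp [Matrix.one_apply]
  refine ⟨?_, ?_, ?_⟩
  · intro x
    rw [mem_Icc, hpbar x]
    constructor
    · exact Finset.sum_nonneg fun i _ => mul_nonneg (hlam_nonneg i) (hq_nonneg i x)
    · calc ∑ i, lam i * q i x ≤ ∑ i, q i x :=
            Finset.sum_le_sum fun i _ =>
              mul_le_of_le_one_left (hq_nonneg i x) (hlam_le i)
      _ = 1 := hq_sum x
  · simp only [hpbar]
    rw [integral_finset_sum _ fun i _ => (hqint i).const_mul _]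
    have h3 : ∀ i : Fin d, (∫ x, lam i * q i x ∂μ) = lam i := by
      intro i
      rw [integral_const_mul, hq_integral i, mul_one]
    simp only [h3]
    exact hlam_sum
  · have hpoint : ∀ x, ∑ i, f (lam i) * q i x ≤ f (((ρ * P x).trace).re) := by
      intro x
      rw [hpbar x]
      have h4 := hf.le_map_sum (t := Finset.univ) (w := fun i => q i x) (p := lam)
        (fun i _ => hq_nonneg i x) (hq_sum x) (fun i _ => ⟨hlam_nonneg i, hlam_le i⟩)
      simpa [smul_eq_mul, mul_comm] using h4
    have hLint : Integrable (fun x => ∑ i, f (lam i) * q i x) μ :=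
      integrable_finset_sum _ fun i _ => (hqint i).const_mul _
    have h5 : trF f ρ = ∑ i, f (lam i) := by
      unfold trF
      rw [dif_pos hρH]
    have h6 : ∑ i, f (lam i) = ∫ x, ∑ i, f (lam i) * q i x ∂μ := by
      rw [integral_finset_sum _ fun i _ => (hqint i).const_mul _]
      refine (Finset.sum_congr rfl fun i _ => ?_).symm
      rw [integral_const_mul, hq_integral i, mul_one]
    rw [h5, h6]
    exact integral_mono hLint hfint hpoint
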